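/- Let g be a Lie algebra with basis e₁,...,eₙ, let D be an almost inner derivation determined by φ_D (i.e., D(x)=[x,φ_D(x)]), and suppose indices i,j,k,l,m with l≠m and nonzero scalars α, β satisfy: [e_j,e_i] - α e_l and [e_k,e_i] - β e_m lie in the span of basis vectors other than e_l,e_m, and [e_j, g_i] and [e_k, g_i] are contained in that span, where g_i is the span of basis vectors other than e_i. Then t_i(φ_D(e_j)) = t_i(φ_D(e_k)). -/

import Mathlib

/-- Lemma 3.7: with `l ≠ m` and nonzero scalars `α, β` such that
`[e_j,e_i] - α e_l ∈ g_{l,m}`, `[e_k,e_i] - β e_m ∈ g_{l,m}`,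
`[e_j, g_i] ⊆ g_{l,m}` and `[e_k, g_i] ⊆ g_{l,m}`, any almost inner
derivation `D` determined by `φ` satisfies `t_i(φ(e_j)) = t_i(φ(e_k))`. -/
theorem stmt13 {K L : Type*} [Field K] [LieRing L] [LieAlgebra K L]
    {n : ℕ} (e : Module.Basis (Fin n) K L)
    (D : LieDerivation K L L) (φ : L → L)
    (hφ : ∀ x : L, D x = ⁅x, φ x⁆)
    (i j k l m : Fin n) (hlm : l ≠ m) (α β : K) (hα : α ≠ 0) (hβ : β ≠ 0)
    (glm : Submodule K L) (hglm : glm = Submodule.span K (e '' {p | p ≠ l ∧ p ≠ m}))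
    (gi : Submodule K L) (hgi : gi = Submodule.span K (e '' {p | p ≠ i}))
    (h1 : ⁅e j, e i⁆ - α • e l ∈ glm)
    (h2 : ⁅e k, e i⁆ - β • e m ∈ glm)
    (h3 : ∀ v ∈ gi, ⁅e j, v⁆ ∈ glm)
    (h4 : ∀ v ∈ gi, ⁅e k, v⁆ ∈ glm) :
    e.repr (φ (e j)) i = e.repr (φ (e k)) i := by
  -- coordinates l and m of elements of glm vanish
  have hzero : ∀ x ∈ glm, e.repr x l = 0 ∧ e.repr x m = 0 := by
    intro x hx
    rw [hglm, Module.Basis.mem_span_image] at hx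
    constructor
    · by_contra h
      exact absurd (hx (Finsupp.mem_support_iff.2 h)).1 (by simp)
    · by_contra h
      exact absurd (hx (Finsupp.mem_support_iff.2 h)).2 (by simp)
  -- decomposition: x - (t_i x) • e i ∈ gi
  have hdec : ∀ x : L, x - (e.repr x i) • e i ∈ gi := by
    intro x
    rw [hgi, Module.Basis.mem_span_image]
    intro p hp
    simp only [Finsupp.mem_support_iff, map_sub, map_smul, Finsupp.sub_apply,
      Finsupp.smul_apply, Module.Basis.repr_self] at hp
    simp only [Set.mem_setOf_eq]
    intro hpi
    subst hpi
    simp at hp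
  -- bracket with e j
  have hbj : ∀ x : L, ⁅e j, x⁆ - (e.repr x i * α) • e l ∈ glm := by
    intro x
    have h5 := h3 _ (hdec x)
    have : ⁅e j, x⁆ - (e.repr x i * α) • e l
        = (e.repr x i) • (⁅e j, e i⁆ - α • e l) + ⁅e j, x - (e.repr x i) • e i⁆ := by
      simp [lie_sub, lie_smul, smul_sub, smul_smul, mul_comm]
    rw [this]
    exact glm.add_mem (glm.smul_mem _ h1) h5
  have hbk : ∀ x : L, ⁅e k, x⁆ - (e.repr x i * β) • e m ∈ glm := by
    intro x
    have h5 := h4 _ (hdec x)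
    have : ⁅e k, x⁆ - (e.repr x i * β) • e m
        = (e.repr x i) • (⁅e k, e i⁆ - β • e m) + ⁅e k, x - (e.repr x i) • e i⁆ := by
      simp [lie_sub, lie_smul, smul_sub, smul_smul, mul_comm]
    rw [this]
    exact glm.add_mem (glm.smul_mem _ h2) h5
  set y := φ (e j + e k) with hy
  set cj := e.repr (φ (e j)) i
  set ck := e.repr (φ (e k)) i
  set c := e.repr y i
  -- key identity from linearity of D
  have hD : ⁅e j, φ (e j)⁆ + ⁅e k, φ (e k)⁆ = ⁅e j, y⁆ + ⁅e k, y⁆ := by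
    rw [← hφ, ← hφ, ← map_add, hφ, add_lie]
  -- coordinate extraction helpers
  have reprl : ∀ (x : L) (s : K), x - s • e l ∈ glm → e.repr x l = s ∧ e.repr x m = 0 := by
    intro x s hx
    have h5 := (hzero _ hx).1
    have h6 := (hzero _ hx).2
    simp [Finsupp.single_apply, hlm, Ne.symm hlm, sub_eq_zero] at h5 h6
    exact ⟨h5, h6⟩
  have reprm : ∀ (x : L) (s : K), x - s • e m ∈ glm → e.repr x m = s ∧ e.repr x l = 0 := by
    intro x s hx
    have h5 := (hzero _ hx).2
    have h6 := (hzero _ hx).1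
    simp [Finsupp.single_apply, hlm, Ne.symm hlm, sub_eq_zero] at h5 h6
    exact ⟨h5, h6⟩
  -- compare l-coordinates
  have hl1 := reprl _ _ (hbj y)
  have hl2 := reprm _ _ (hbk y)
  have hl3 := reprl _ _ (hbj (φ (e j)))
  have hl4 := reprm _ _ (hbk (φ (e k)))
  have el : c * α = cj * α := by
    have := congrArg (fun z => e.repr z l) hD
    simpa [map_add, Finsupp.add_apply, hl1.1, hl2.2, hl3.1, hl4.2] using this.symm
  have em : ck * β = c * β := by
    have := congrArg (fun z => e.repr z m) hD
    simpa [map_add, Finsupp.add_apply, hl1.2, hl2.1, hl3.2, hl4.1] using this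
  have e1 : c = cj := mul_right_cancel₀ hα el
  have e2 : ck = c := mul_right_cancel₀ hβ em
  rw [← e1, e2]
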